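/- For integers 1 ≤ i ≤ d−1, if 1 − 2i/d ∈ {−1, −1/2, 0, 1/2, 1} and 1 − 4i/d + 4i(i−1)/(d(d−1)) ∈ {−1, −1/2, 0, 1/2, 1} (with d ≥ 2), then (d,i) ∈ {(2,1), (4,1), (4,3)}. -/

import Mathlib

set_option maxHeartbeats 1000000

theorem hamming_periodic_classes (d i : ℕ) (hd : 2 ≤ d) (hi1 : 1 ≤ i) (hi2 : i ≤ d - 1)
    (h1 : (1 - 2 * (i : ℚ) / d) ∈ ({-1, -1/2, 0, 1/2, 1} : Set ℚ))
    (h2 : (1 - 4 * (i : ℚ) / d + 4 * i * (i - 1) / (d * (d - 1))) ∈ ({-1, -1/2, 0, 1/2, 1} : Set ℚ)) :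
    (d = 2 ∧ i = 1) ∨ (d = 4 ∧ i = 1) ∨ (d = 4 ∧ i = 3) := by
  have hid : i < d := by omega
  have hD0 : (d:ℚ) ≠ 0 := Nat.cast_ne_zero.2 (by omega)
  have hI1 : (1:ℚ) ≤ (i:ℚ) := by exact_mod_cast hi1
  have hI0 : (i:ℚ) ≠ 0 := Nat.cast_ne_zero.2 (by omega)
  simp only [Set.mem_insert_iff, Set.mem_singleton_iff] at h1 h2
  have key : 4*i = d ∨ 2*i = d ∨ 4*i = 3*d := by
    rcases h1 with h|h|h|h|h
    · exfalso
      field_simp at h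
      have : (2*i:ℚ) = 2*d := by linarith
      have : 2*i = 2*d := by exact_mod_cast this
      omega
    · right; right
      field_simp at h
      have : (4*i:ℚ) = 3*d := by linarith
      exact_mod_cast this
    · right; left
      field_simp at h
      have : (2*i:ℚ) = d := by linarith
      exact_mod_cast this
    · left
      field_simp at h
      have : (4*i:ℚ) = d := by linarith
      exact_mod_cast this
    · field_simp at h
      exact absurd (by linear_combination (-1/2:ℚ)*h : (i:ℚ) = 0) hI0
  clear h1
  have ipos : 0 < i := hi1
  rcases key with hk | hk | hk
  -- Case B : d = 4 i
  · have hcd : (d:ℚ) = 4*i := by rw [← hk]; push_cast; ring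
    have h41 : (4*(i:ℚ)-1) ≠ 0 := by intro h; nlinarith
    rw [hcd] at h2
    rcases h2 with h|h|h|h|h
    · field_simp at h
      have t : (4*(i:ℚ))*(5*i) = (4*(i:ℚ))*2 := by linear_combination (4*(i:ℚ))*h
      have tn : 4*i*(5*i) = 4*i*2 := by exact_mod_cast t
      have := Nat.eq_of_mul_eq_mul_left (show 0 < 4*i by positivity) tn
      omega
    · field_simp at h
      have t : (12*(i:ℚ))*(2*i) = (12*(i:ℚ))*1 := by linear_combination (4*(i:ℚ))*h
      have tn : 12*i*(2*i) = 12*i*1 := by exact_mod_cast t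
      have := Nat.eq_of_mul_eq_mul_left (show 0 < 12*i by positivity) tn
      omega
    · field_simp at h
      have t : (4*(i:ℚ))*i = (4*(i:ℚ))*1 := by linear_combination (4*(i:ℚ))*h
      have tn : 4*i*i = 4*i*1 := by exact_mod_cast t
      have := Nat.eq_of_mul_eq_mul_left (show 0 < 4*i by positivity) tn
      omega
    · exfalso
      field_simp at h
      have t : 8*(i:ℚ)*i + 4*i = 0 := by linear_combination (-4*(i:ℚ))*h
      have p2 : (1:ℚ) ≤ (i:ℚ)*i := by nlinarith
      have p3 : (1:ℚ) ≤ (i:ℚ)*i*i := by nlinarith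
      linarith
    · exfalso
      field_simp at h
      exact hI0 (by linear_combination (-1/3:ℚ)*h)
  -- Case A : d = 2 i
  · have hcd : (d:ℚ) = 2*i := by rw [← hk]; push_cast; ring
    have h21 : (2*(i:ℚ)-1) ≠ 0 := by intro h; nlinarith
    have h21' : ((i:ℚ)*2-1) ≠ 0 := by rw [mul_comm]; exact h21
    rw [hcd] at h2
    rcases h2 with h|h|h|h|h
    · field_simp at h
      have t : (8*(i:ℚ)*i)*i = (8*(i:ℚ)*i)*1 := by linear_combination (2*(i:ℚ)^2)*h
      have tn : 8*i*i*i = 8*i*i*1 := by exact_mod_cast t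
      have := Nat.eq_of_mul_eq_mul_left (show 0 < 8*i*i by positivity) tn
      omega
    · field_simp at h
      have t : (4*(i:ℚ)*i)*(2*i) = (4*(i:ℚ)*i)*3 := by linear_combination (4*(i:ℚ)^2)*h
      have tn : 4*i*i*(2*i) = 4*i*i*3 := by exact_mod_cast t
      have := Nat.eq_of_mul_eq_mul_left (show 0 < 4*i*i by positivity) tn
      omega
    · exfalso
      field_simp at h
      have t : 4*(i:ℚ)*i = 0 := by linear_combination (-2*(i:ℚ)^2)*h
      have p2 : (1:ℚ) ≤ (i:ℚ)*i := by nlinarith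
      have p3 : (1:ℚ) ≤ (i:ℚ)*i*i := by nlinarith
      linarith
    · exfalso
      field_simp at h
      have t : 8*(i:ℚ)*i*i + 4*i*i = 0 := by linear_combination (-4*(i:ℚ)^2)*h
      have p2 : (1:ℚ) ≤ (i:ℚ)*i := by nlinarith
      have p3 : (1:ℚ) ≤ (i:ℚ)*i*i := by nlinarith
      linarith
    · exfalso
      field_simp at h
      have t : 8*(i:ℚ)*i*i = 0 := by linear_combination (-2*(i:ℚ)^2)*h
      have p2 : (1:ℚ) ≤ (i:ℚ)*i := by nlinarith
      have p3 : (1:ℚ) ≤ (i:ℚ)*i*i := by nlinarith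
      linarith
  -- Case C : 4 i = 3 d
  · have h4 : d % 4 = 0 := by omega
    obtain ⟨j, hdj⟩ : ∃ j, d = 4*j := ⟨d/4, by omega⟩
    have hij : i = 3*j := by omega
    have hj1 : 1 ≤ j := by omega
    have hJ1 : (1:ℚ) ≤ (j:ℚ) := by exact_mod_cast hj1
    have hJ0 : (j:ℚ) ≠ 0 := Nat.cast_ne_zero.2 (by omega)
    have h41 : (4*(j:ℚ)-1) ≠ 0 := by intro h; nlinarith
    have hcd : (d:ℚ) = 4*j := by rw [hdj]; push_cast; ring
    have hci : (i:ℚ) = 3*j := by rw [hij]; push_cast; ring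
    rw [hcd, hci] at h2
    clear hcd hci hk hid hi2 hD0 hI1 hI0
    rcases h2 with h|h|h|h|h
    · field_simp at h
      have t : (16*(j:ℚ)*j)*(5*j) = (16*(j:ℚ)*j)*2 := by linear_combination (16*(j:ℚ)^2)*h
      have tn : 16*j*j*(5*j) = 16*j*j*2 := by exact_mod_cast t
      have := Nat.eq_of_mul_eq_mul_left (show 0 < 16*j*j by positivity) tn
      omega
    · field_simp at h
      have t : (48*(j:ℚ)*j)*(2*j) = (48*(j:ℚ)*j)*1 := by linear_combination (16*(j:ℚ)^2)*h
      have tn : 48*j*j*(2*j) = 48*j*j*1 := by exact_mod_cast t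
      have := Nat.eq_of_mul_eq_mul_left (show 0 < 48*j*j by positivity) tn
      omega
    · field_simp at h
      have t : (16*(j:ℚ)*j)*j = (16*(j:ℚ)*j)*1 := by linear_combination (16*(j:ℚ)^2)*h
      have tn : 16*j*j*j = 16*j*j*1 := by exact_mod_cast t
      have := Nat.eq_of_mul_eq_mul_left (show 0 < 16*j*j by positivity) tn
      omega
    · exfalso
      field_simp at h
      have t : 32*(j:ℚ)*j*j + 16*j*j = 0 := by linear_combination (-16*(j:ℚ)^2)*h
      have p2 : (1:ℚ) ≤ (j:ℚ)*j := by nlinarith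
      have p3 : (1:ℚ) ≤ (j:ℚ)*j*j := by nlinarith
      linarith
    · exfalso
      field_simp at h
      have t : 48*(j:ℚ)*j*j = 0 := by linear_combination (-16*(j:ℚ)^2)*h
      have p2 : (1:ℚ) ≤ (j:ℚ)*j := by nlinarith
      have p3 : (1:ℚ) ≤ (j:ℚ)*j*j := by nlinarith
      linarith
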